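/- Let ℓ ≥ 5 be an integer, and let G be a uniformly random subset of {1,…,ℓ⁷} of size ℓ². For any fixed subset L ⊆ {1,…,ℓ⁷} with |L| < 2ℓ⁴, the probability that |L ∩ G| > ℓ is at most e^{-ℓ}. -/

import Mathlib

set_option maxHeartbeats 1000000

open Finset Real

lemma pow_le_factorial_mul_exp' (n : ℕ) : (n : ℝ) ^ n ≤ (n.factorial : ℝ) * Real.exp n := by
  induction n with
  | zero => simp
  | succ n ih =>
    rcases Nat.eq_zero_or_pos n with rfl | hn
    · simpa using Real.one_le_exp (by norm_num : (0:ℝ) ≤ 1)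
    have hn' : (0:ℝ) < n := by exact_mod_cast hn
    have h1 : ((n:ℝ) + 1) ^ n ≤ Real.exp 1 * (n:ℝ) ^ n := by
      have h2 : (1 + 1/(n:ℝ)) ^ n ≤ Real.exp 1 := by
        have := Real.add_one_le_exp (1/(n:ℝ))
        calc (1 + 1/(n:ℝ)) ^ n ≤ (Real.exp (1/(n:ℝ))) ^ n := by
              apply pow_le_pow_left₀ (by positivity)
              linarith
          _ = Real.exp (n * (1/(n:ℝ))) := by rw [← Real.exp_nat_mul]
          _ = Real.exp 1 := by rw [mul_one_div, div_self hn'.ne']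
      calc ((n:ℝ) + 1) ^ n = ((1 + 1/(n:ℝ)) * n) ^ n := by
            field_simp
          _ = (1 + 1/(n:ℝ)) ^ n * (n:ℝ) ^ n := by rw [mul_pow]
          _ ≤ Real.exp 1 * (n:ℝ) ^ n := by
            apply mul_le_mul_of_nonneg_right h2 (by positivity)
    push_cast
    calc ((n:ℝ) + 1) ^ (n + 1) = ((n:ℝ) + 1) * ((n:ℝ)+1) ^ n := by ring
      _ ≤ ((n:ℝ) + 1) * (Real.exp 1 * (n:ℝ) ^ n) := by
          apply mul_le_mul_of_nonneg_left h1 (by positivity)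
      _ ≤ ((n:ℝ) + 1) * (Real.exp 1 * ((n.factorial : ℝ) * Real.exp n)) := by
          have : Real.exp 1 * (n:ℝ)^n ≤ Real.exp 1 * ((n.factorial : ℝ) * Real.exp n) :=
            mul_le_mul_of_nonneg_left ih (Real.exp_pos 1).le
          apply mul_le_mul_of_nonneg_left this (by positivity)
      _ = (((n:ℝ)+1) * (n.factorial : ℝ)) * (Real.exp 1 * Real.exp n) := by ring
      _ = ((n+1).factorial : ℝ) * Real.exp ((n:ℝ)+1) := by
          rw [← Real.exp_add]
          push_cast [Nat.factorial_succ]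
          ring_nf


lemma count_supersets {n k m : ℕ} (S : Finset (Fin n)) (hS : S.card = k) :
    ((Finset.powersetCard m (Finset.univ : Finset (Fin n))).filter (fun G => S ⊆ G)).card
      ≤ (n - k).choose (m - k) := by
  have h1 : ((Finset.powersetCard m (Finset.univ : Finset (Fin n))).filter
      (fun G => S ⊆ G)).card ≤ (Finset.powersetCard (m - k) (Finset.univ \ S)).card := by
    apply Finset.card_le_card_of_injOn (fun G => G \ S)
    · intro G hG
      simp only [Finset.mem_coe, Finset.mem_filter, Finset.mem_powersetCard] at hG
      obtain ⟨⟨hGu, hGc⟩, hSG⟩ := hG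
      refine Finset.mem_powersetCard.mpr ⟨Finset.sdiff_subset_sdiff hGu le_rfl, ?_⟩
      rw [Finset.card_sdiff_of_subset hSG, hGc, hS]
    · intro G1 h1 G2 h2 h
      simp only [Finset.coe_filter, Set.mem_setOf_eq] at h1 h2
      have e1 : G1 \ S ∪ S = G1 := Finset.sdiff_union_of_subset h1.2
      have e2 : G2 \ S ∪ S = G2 := Finset.sdiff_union_of_subset h2.2
      have h' : G1 \ S = G2 \ S := h
      rw [← e1, ← e2, h']
  calc _ ≤ (Finset.powersetCard (m - k) (Finset.univ \ S)).card := h1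
    _ = (n - k).choose (m - k) := by
        rw [Finset.card_powersetCard, Finset.card_sdiff_of_subset (Finset.subset_univ S),
          Finset.card_univ, Fintype.card_fin, hS]

theorem stmt_6 (ℓ : ℕ) (hℓ : 5 ≤ ℓ) (L : Finset (Fin (ℓ ^ 7)))
    (hL : L.card < 2 * ℓ ^ 4) :
    (((Finset.powersetCard (ℓ ^ 2) (Finset.univ : Finset (Fin (ℓ ^ 7)))).filter
        (fun G => ℓ < (L ∩ G).card)).card : ℝ) ≤
      Real.exp (-(ℓ : ℝ)) *
        ((Finset.powersetCard (ℓ ^ 2) (Finset.univ : Finset (Fin (ℓ ^ 7)))).card : ℝ) := by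
  set P := Finset.powersetCard (ℓ ^ 2) (Finset.univ : Finset (Fin (ℓ ^ 7))) with hP
  obtain ⟨k, hk⟩ : ∃ k : ℕ, k = ℓ + 1 := ⟨_, rfl⟩
  -- basic inequalities
  have hk_le_m : k ≤ ℓ ^ 2 := by nlinarith
  have hm_le_n : ℓ ^ 2 ≤ ℓ ^ 7 := Nat.pow_le_pow_right (by omega) (by omega)
  have hk_le_n : k ≤ ℓ ^ 7 := hk_le_m.trans hm_le_n
  have hl_le_n : ℓ ≤ ℓ ^ 7 := Nat.le_self_pow (by omega) ℓ
  -- union bound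
  have hsub : P.filter (fun G => ℓ < (L ∩ G).card) ⊆
      (L.powersetCard k).biUnion (fun S => P.filter (fun G => S ⊆ G)) := by
    intro G hG
    simp only [Finset.mem_filter] at hG
    obtain ⟨S, hS1, hS2⟩ := Finset.exists_subset_card_eq (show k ≤ (L ∩ G).card by omega)
    refine Finset.mem_biUnion.mpr ⟨S, ?_, ?_⟩
    · exact Finset.mem_powersetCard.mpr ⟨hS1.trans Finset.inter_subset_left, hS2⟩
    · exact Finset.mem_filter.mpr ⟨hG.1, hS1.trans Finset.inter_subset_right⟩
  have hcount : (P.filter (fun G => ℓ < (L ∩ G).card)).card ≤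
      L.card.choose k * (ℓ ^ 7 - k).choose (ℓ ^ 2 - k) := by
    calc (P.filter (fun G => ℓ < (L ∩ G).card)).card
        ≤ ((L.powersetCard k).biUnion (fun S => P.filter (fun G => S ⊆ G))).card :=
          Finset.card_le_card hsub
      _ ≤ ∑ S ∈ L.powersetCard k, (P.filter (fun G => S ⊆ G)).card :=
          Finset.card_biUnion_le
      _ ≤ ∑ _S ∈ L.powersetCard k, (ℓ ^ 7 - k).choose (ℓ ^ 2 - k) := by
          apply Finset.sum_le_sum
          intro S hS
          exact count_supersets S (Finset.mem_powersetCard.mp hS).2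
      _ = (L.powersetCard k).card * (ℓ ^ 7 - k).choose (ℓ ^ 2 - k) := by
          rw [Finset.sum_const, smul_eq_mul]
      _ = L.card.choose k * (ℓ ^ 7 - k).choose (ℓ ^ 2 - k) := by
          rw [Finset.card_powersetCard]
  have hPcard : P.card = (ℓ ^ 7).choose (ℓ ^ 2) := by
    rw [hP, Finset.card_powersetCard, Finset.card_univ, Fintype.card_fin]
  -- identity
  have hid : (ℓ ^ 7).choose (ℓ ^ 2) * (ℓ ^ 2).choose k =
      (ℓ ^ 7).choose k * (ℓ ^ 7 - k).choose (ℓ ^ 2 - k) := Nat.choose_mul hk_le_m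
  -- core bound in ℝ
  have hcore : (L.card.choose k : ℝ) * ((ℓ ^ 2).choose k : ℝ) ≤
      Real.exp (-(ℓ : ℝ)) * ((ℓ ^ 7).choose k : ℝ) := by
    have hfpos : (0 : ℝ) < (k.factorial : ℝ) := by positivity
    rw [← mul_le_mul_iff_of_pos_right (by positivity : (0:ℝ) < (k.factorial : ℝ) * (k.factorial : ℝ))]
    -- LHS bound
    have hA : (L.card.choose k : ℝ) * (k.factorial : ℝ) ≤ (2 * (ℓ:ℝ) ^ 4) ^ k := by
      have h1 : L.card.choose k * k.factorial ≤ (2 * ℓ ^ 4) ^ k := by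
        calc L.card.choose k * k.factorial = L.card.descFactorial k := by
              rw [Nat.descFactorial_eq_factorial_mul_choose]; ring
          _ ≤ L.card ^ k := Nat.descFactorial_le_pow _ _
          _ ≤ (2 * ℓ ^ 4) ^ k := Nat.pow_le_pow_left (le_of_lt hL) k
      calc (L.card.choose k : ℝ) * (k.factorial : ℝ)
          = ((L.card.choose k * k.factorial : ℕ) : ℝ) := by push_cast; ring
        _ ≤ (((2 * ℓ ^ 4) ^ k : ℕ) : ℝ) := by exact_mod_cast h1
        _ = (2 * (ℓ:ℝ) ^ 4) ^ k := by push_cast; ring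
    have hM : ((ℓ ^ 2).choose k : ℝ) * (k.factorial : ℝ) ≤ ((ℓ:ℝ) ^ 2) ^ k := by
      have h1 : (ℓ ^ 2).choose k * k.factorial ≤ (ℓ ^ 2) ^ k := by
        calc (ℓ ^ 2).choose k * k.factorial = (ℓ ^ 2).descFactorial k := by
              rw [Nat.descFactorial_eq_factorial_mul_choose]; ring
          _ ≤ (ℓ ^ 2) ^ k := Nat.descFactorial_le_pow _ _
      exact_mod_cast h1
    have hN : ((ℓ:ℝ) ^ 7 - (ℓ:ℝ)) ^ k ≤ ((ℓ ^ 7).choose k : ℝ) * (k.factorial : ℝ) := by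
      have h1 : (ℓ ^ 7 + 1 - k) ^ k ≤ (ℓ ^ 7).choose k * k.factorial := by
        calc (ℓ ^ 7 + 1 - k) ^ k ≤ (ℓ ^ 7).descFactorial k :=
              Nat.pow_sub_le_descFactorial _ _
          _ = (ℓ ^ 7).choose k * k.factorial := by
              rw [Nat.descFactorial_eq_factorial_mul_choose]; ring
      have h2 : ℓ ^ 7 + 1 - k = ℓ ^ 7 - ℓ := by omega
      rw [h2] at h1
      calc ((ℓ:ℝ) ^ 7 - (ℓ:ℝ)) ^ k = (((ℓ ^ 7 - ℓ : ℕ) : ℝ)) ^ k := by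
            rw [Nat.cast_sub hl_le_n]; push_cast; ring
        _ ≤ ((ℓ ^ 7).choose k : ℝ) * (k.factorial : ℝ) := by exact_mod_cast h1
    have hK : ((k:ℝ)) ^ k * Real.exp (-(k:ℝ)) ≤ (k.factorial : ℝ) := by
      have := pow_le_factorial_mul_exp' k
      rw [Real.exp_neg]
      rw [mul_inv_le_iff₀ (Real.exp_pos _)]
      linarith [this]
    -- numeric core
    have hexp2 : Real.exp 2 < 7.4 := by
      have h := Real.exp_one_lt_d9
      have : Real.exp 2 = Real.exp 1 * Real.exp 1 := by rw [← Real.exp_add]; norm_num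
      rw [this]; nlinarith [Real.exp_pos 1]
    have hℓR : (5:ℝ) ≤ (ℓ:ℝ) := by exact_mod_cast hℓ
    have hkR : (k:ℝ) = (ℓ:ℝ) + 1 := by rw [hk]; push_cast; ring
    have base : 2 * (ℓ:ℝ) ^ 6 ≤ ((ℓ:ℝ) ^ 7 - (ℓ:ℝ)) * (k:ℝ) * Real.exp (-2) := by
      rw [Real.exp_neg, le_mul_inv_iff₀ (Real.exp_pos _), hkR]
      have e7 : (ℓ:ℝ) ^ 7 = (ℓ:ℝ) * (ℓ:ℝ) ^ 6 := by ring
      have h6 : (0:ℝ) < (ℓ:ℝ) ^ 6 := by positivity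
      have h76 : 5 * (ℓ:ℝ) ^ 6 ≤ (ℓ:ℝ) ^ 7 := by nlinarith
      have h3 : (ℓ:ℝ) ^ 3 ≤ (ℓ:ℝ) ^ 7 := pow_le_pow_right₀ (by linarith) (by norm_num)
      have hsq : (ℓ:ℝ) ≤ (ℓ:ℝ) ^ 2 := by nlinarith
      have hcube : 2 * (ℓ:ℝ) ^ 2 ≤ (ℓ:ℝ) ^ 3 := by nlinarith
      have h27 : (ℓ:ℝ) ^ 2 + (ℓ:ℝ) ≤ (ℓ:ℝ) ^ 7 := by linarith
      have h87 : 5 * (ℓ:ℝ) ^ 7 ≤ (ℓ:ℝ) ^ 8 := by nlinarith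
      have hE : 2 * (ℓ:ℝ) ^ 6 * Real.exp 2 ≤ 14.8 * (ℓ:ℝ) ^ 6 := by nlinarith [h6, hexp2, Real.exp_pos 2]
      nlinarith [hE, h76, h27, h87]
    have hnum : (2 * (ℓ:ℝ) ^ 6) ^ k ≤
        Real.exp (-(ℓ:ℝ)) * (((ℓ:ℝ) ^ 7 - (ℓ:ℝ)) ^ k * ((k:ℝ) ^ k * Real.exp (-(k:ℝ)))) := by
      have hpos : (0:ℝ) ≤ 2 * (ℓ:ℝ) ^ 6 := by positivity
      calc (2 * (ℓ:ℝ) ^ 6) ^ k ≤ (((ℓ:ℝ) ^ 7 - (ℓ:ℝ)) * (k:ℝ) * Real.exp (-2)) ^ k :=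
            pow_le_pow_left₀ hpos base k
        _ = ((ℓ:ℝ) ^ 7 - (ℓ:ℝ)) ^ k * (k:ℝ) ^ k * Real.exp (-2) ^ k := by
            rw [mul_pow, mul_pow]
        _ = ((ℓ:ℝ) ^ 7 - (ℓ:ℝ)) ^ k * (k:ℝ) ^ k * Real.exp (-2 * (k:ℝ)) := by
            rw [← Real.exp_nat_mul]; ring_nf
        _ ≤ ((ℓ:ℝ) ^ 7 - (ℓ:ℝ)) ^ k * (k:ℝ) ^ k * Real.exp (-(ℓ:ℝ) + -(k:ℝ)) := by
            apply mul_le_mul_of_nonneg_left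
            · apply Real.exp_le_exp.mpr
              linarith [hkR]
            · have h7' : (ℓ:ℝ) ≤ (ℓ:ℝ) ^ 7 := by exact_mod_cast hl_le_n
              have h7 : (0:ℝ) ≤ (ℓ:ℝ) ^ 7 - (ℓ:ℝ) := by linarith
              exact mul_nonneg (pow_nonneg h7 _) (by positivity)
        _ = Real.exp (-(ℓ:ℝ)) * (((ℓ:ℝ) ^ 7 - (ℓ:ℝ)) ^ k * ((k:ℝ) ^ k * Real.exp (-(k:ℝ)))) := by
            rw [Real.exp_add]; ring
    -- combine
    calc (L.card.choose k : ℝ) * ((ℓ ^ 2).choose k : ℝ) * ((k.factorial : ℝ) * (k.factorial : ℝ))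
        = ((L.card.choose k : ℝ) * (k.factorial : ℝ)) * (((ℓ ^ 2).choose k : ℝ) * (k.factorial : ℝ)) := by ring
      _ ≤ (2 * (ℓ:ℝ) ^ 4) ^ k * ((ℓ:ℝ) ^ 2) ^ k := by
          apply mul_le_mul hA hM (by positivity) (by positivity)
      _ = (2 * (ℓ:ℝ) ^ 6) ^ k := by rw [← mul_pow]; ring_nf
      _ ≤ Real.exp (-(ℓ:ℝ)) * (((ℓ:ℝ) ^ 7 - (ℓ:ℝ)) ^ k * ((k:ℝ) ^ k * Real.exp (-(k:ℝ)))) := hnum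
      _ ≤ Real.exp (-(ℓ:ℝ)) * ((((ℓ ^ 7).choose k : ℝ) * (k.factorial : ℝ)) * (k.factorial : ℝ)) := by
          apply mul_le_mul_of_nonneg_left _ (Real.exp_pos _).le
          apply mul_le_mul hN hK (by positivity) (by positivity)
      _ = Real.exp (-(ℓ:ℝ)) * ((ℓ ^ 7).choose k : ℝ) * ((k.factorial : ℝ) * (k.factorial : ℝ)) := by ring
  -- assemble
  have hNk_pos : (0:ℝ) < ((ℓ ^ 7).choose k : ℝ) := by
    exact_mod_cast Nat.choose_pos hk_le_n
  rw [← mul_le_mul_iff_of_pos_right hNk_pos]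
  have hidR : ((ℓ ^ 7 - k).choose (ℓ ^ 2 - k) : ℝ) * ((ℓ ^ 7).choose k : ℝ) =
      ((ℓ ^ 2).choose k : ℝ) * ((ℓ ^ 7).choose (ℓ ^ 2) : ℝ) := by
    have h := congrArg (fun x : ℕ => (x:ℝ)) hid
    push_cast at h
    linarith
  calc ((P.filter (fun G => ℓ < (L ∩ G).card)).card : ℝ) * ((ℓ ^ 7).choose k : ℝ)
      ≤ ((L.card.choose k * (ℓ ^ 7 - k).choose (ℓ ^ 2 - k) : ℕ) : ℝ) * ((ℓ ^ 7).choose k : ℝ) := by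
        apply mul_le_mul_of_nonneg_right _ hNk_pos.le
        exact_mod_cast hcount
    _ = (L.card.choose k : ℝ) * (((ℓ ^ 7 - k).choose (ℓ ^ 2 - k) : ℝ) * ((ℓ ^ 7).choose k : ℝ)) := by
        push_cast; ring
    _ = (L.card.choose k : ℝ) * ((ℓ ^ 2).choose k : ℝ) * ((ℓ ^ 7).choose (ℓ ^ 2) : ℝ) := by
        rw [hidR]; ring
    _ ≤ Real.exp (-(ℓ:ℝ)) * ((ℓ ^ 7).choose k : ℝ) * ((ℓ ^ 7).choose (ℓ ^ 2) : ℝ) := by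
        apply mul_le_mul_of_nonneg_right hcore (by positivity)
    _ = Real.exp (-(ℓ:ℝ)) * (P.card : ℝ) * ((ℓ ^ 7).choose k : ℝ) := by
        rw [hPcard]; ring
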